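/- Let S be a spanning set of q^{r+1} points in PG(v-1,q) such that every hyperplane contains either 0 or exactly q^r points of S. Then v = r+2 and S is the complement of a hyperplane (an affine space AG(r+1,q)). -/

import Mathlib

open Module
open scoped Classical

namespace Stmt11Aux

variable {v : ℕ} {F : Type} [Field F] [Fintype F]

noncomputable local instance : Fintype (Module.Dual F (Fin v → F)) :=
  Fintype.ofInjective DFunLike.coe DFunLike.coe_injective

lemma ann_card (W : Submodule F (Fin v → F)) :
    (Finset.univ.filter fun f : Module.Dual F (Fin v → F) => W ≤ LinearMap.ker f).card
      = Fintype.card F ^ (v - finrank F W) := by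
  have h2 : (Finset.univ.filter fun f : Module.Dual F (Fin v → F) => W ≤ LinearMap.ker f)
      = Finset.univ.filter (fun f => f ∈ W.dualAnnihilator) := by
    apply Finset.filter_congr
    intro f _
    rw [Submodule.mem_dualAnnihilator]
    constructor
    · intro h w hw; exact h hw
    · intro h x hx; exact h x hx
  have h3 : finrank F W.dualAnnihilator = v - finrank F W := by
    have h4 := Submodule.finrank_quotient_add_finrank W
    have h5 : finrank F ((Fin v → F) ⧸ W) = finrank F W.dualAnnihilator :=
      LinearEquiv.finrank_eq (Subspace.quotEquivAnnihilator W)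
    have h6 : finrank F (Fin v → F) = v := finrank_fin_fun F
    omega
  rw [h2, ← Fintype.card_subtype, ← h3]
  exact Module.card_eq_pow_finrank (K := F) (V := W.dualAnnihilator)

lemma ann_card_ne (W : Submodule F (Fin v → F)) :
    (Finset.univ.filter fun f : Module.Dual F (Fin v → F) =>
      f ≠ 0 ∧ W ≤ LinearMap.ker f).card = Fintype.card F ^ (v - finrank F W) - 1 := by
  have h1 : (Finset.univ.filter fun f : Module.Dual F (Fin v → F) =>
      f ≠ 0 ∧ W ≤ LinearMap.ker f)
      = (Finset.univ.filter fun f : Module.Dual F (Fin v → F) =>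
        W ≤ LinearMap.ker f).erase 0 := by
    ext f
    simp only [Finset.mem_filter, Finset.mem_erase, Finset.mem_univ, true_and, and_comm]
  have h0 : (0 : Module.Dual F (Fin v → F)) ∈
      (Finset.univ.filter fun f : Module.Dual F (Fin v → F) => W ≤ LinearMap.ker f) := by
    simp only [Finset.mem_filter, Finset.mem_univ, true_and]
    rw [LinearMap.ker_zero]
    exact le_top
  rw [h1, Finset.card_erase_of_mem h0, ann_card]

lemma inf_bot (P W : Submodule F (Fin v → F)) (hP : finrank F P = 1) (h : ¬ P ≤ W) :
    P ⊓ W = ⊥ := by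
  by_contra hb
  have h1 : 1 ≤ finrank F (P ⊓ W : Submodule F (Fin v → F)) := by
    rcases Nat.eq_zero_or_pos (finrank F (P ⊓ W : Submodule F (Fin v → F))) with h2 | h2
    · exact absurd (Submodule.finrank_eq_zero.mp h2) hb
    · exact h2
  have h2 : P ⊓ W = P := Submodule.eq_of_le_of_finrank_le inf_le_left (by omega)
  exact h (inf_eq_left.mp h2)

lemma sup_rank_two (P Q : Submodule F (Fin v → F)) (hP : finrank F P = 1)
    (hQ : finrank F Q = 1) (hne : P ≠ Q) :
    finrank F (P ⊔ Q : Submodule F (Fin v → F)) = 2 := by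
  have hle : ¬ P ≤ Q := fun h => hne (Submodule.eq_of_le_of_finrank_le h (by omega))
  have hinf := inf_bot P Q hP hle
  have h1 := Submodule.finrank_sup_add_finrank_inf_eq P Q
  rw [hinf, hP, hQ, finrank_bot] at h1
  omega

lemma ker_rank (f : Module.Dual F (Fin v → F)) (hf : f ≠ 0) :
    finrank F (LinearMap.ker f) = v - 1 := by
  have hr : LinearMap.range f = ⊤ := by
    obtain ⟨x, hx⟩ := DFunLike.ne_iff.mp hf
    rw [LinearMap.range_eq_top]
    intro c
    refine ⟨(c * (f x)⁻¹) • x, ?_⟩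
    have hfx : f x ≠ 0 := hx
    simp [map_smul, smul_eq_mul, mul_assoc, inv_mul_cancel₀ hfx]
  have h1 := LinearMap.finrank_range_add_finrank_ker f
  rw [hr, finrank_top, finrank_fin_fun, finrank_self] at h1
  omega

lemma points_off (hv : 2 ≤ v) (H : Submodule F (Fin v → F)) (hH : finrank F H = v - 1) :
    (Finset.univ.filter fun P : Submodule F (Fin v → F) =>
      finrank F P = 1 ∧ ¬ P ≤ H).card * (Fintype.card F - 1)
      = Fintype.card F ^ v - Fintype.card F ^ (v - 1) := by
  classical
  set q := Fintype.card F with hq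
  set T := Finset.univ.filter fun P : Submodule F (Fin v → F) =>
      finrank F P = 1 ∧ ¬ P ≤ H with hT
  set X := Finset.univ.filter fun x : Fin v → F => x ∉ H with hX
  have hmap : ∀ x ∈ X, (Submodule.span F {x}) ∈ T := by
    intro x hx
    rw [hX, Finset.mem_filter] at hx
    have hx0 : x ≠ 0 := fun h => hx.2 (h ▸ H.zero_mem)
    rw [hT, Finset.mem_filter]
    refine ⟨Finset.mem_univ _, finrank_span_singleton hx0, fun hle => ?_⟩
    exact hx.2 (hle (Submodule.mem_span_singleton_self x))
  have hfib := Finset.card_eq_sum_card_fiberwise hmap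
  have hfibc : ∀ P ∈ T, (X.filter fun x => Submodule.span F {x} = P).card = q - 1 := by
    intro P hP
    rw [hT, Finset.mem_filter] at hP
    obtain ⟨-, hP1, hPH⟩ := hP
    have heq : (X.filter fun x => Submodule.span F {x} = P)
        = (Finset.univ.filter fun x : Fin v → F => x ∈ P).erase 0 := by
      ext x
      simp only [hX, Finset.mem_filter, Finset.filter_filter, Finset.mem_erase,
        Finset.mem_univ, true_and]
      constructor
      · rintro ⟨hxH, hsp⟩
        have hx0 : x ≠ 0 := fun h => hxH (h ▸ H.zero_mem)
        exact ⟨hx0, hsp ▸ Submodule.mem_span_singleton_self x⟩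
      · rintro ⟨hx0, hxP⟩
        have hsp : Submodule.span F {x} = P := by
          apply Submodule.eq_of_le_of_finrank_le
          · rwa [Submodule.span_singleton_le_iff_mem]
          · rw [hP1, finrank_span_singleton hx0]
        refine ⟨fun hxH => hx0 ?_, hsp⟩
        have : x ∈ P ⊓ H := ⟨hxP, hxH⟩
        rwa [inf_bot P H hP1 hPH, Submodule.mem_bot] at this
    have h0P : (0 : Fin v → F) ∈ Finset.univ.filter fun x : Fin v → F => x ∈ P := by
      simp [P.zero_mem]
    have hcardP : (Finset.univ.filter fun x : Fin v → F => x ∈ P).card = q := by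
      rw [← Fintype.card_subtype]
      have : Fintype.card P = q ^ finrank F P := card_eq_pow_finrank
      rw [hP1, pow_one] at this
      exact this
    rw [heq, Finset.card_erase_of_mem h0P, hcardP]
  have hXcard : X.card = q ^ v - q ^ (v - 1) := by
    have h1 : (Finset.univ.filter fun x : Fin v → F => x ∈ H).card = q ^ (v - 1) := by
      rw [← Fintype.card_subtype]
      have : Fintype.card H = q ^ finrank F H := card_eq_pow_finrank
      rwa [hH] at this
    have h2 : X.card + (Finset.univ.filter fun x : Fin v → F => x ∈ H).card
        = Fintype.card (Fin v → F) := by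
      rw [hX, ← Finset.card_univ]
      have := Finset.card_filter_add_card_filter_not
        (s := (Finset.univ : Finset (Fin v → F))) (fun x => x ∉ H)
      simpa [not_not] using this
    have h3 : Fintype.card (Fin v → F) = q ^ v := by
      have : Fintype.card (Fin v → F) = q ^ finrank F (Fin v → F) := card_eq_pow_finrank
      rwa [finrank_fin_fun] at this
    omega
  rw [hfib, Finset.sum_congr rfl hfibc, Finset.sum_const, smul_eq_mul] at hXcard
  rw [← hXcard]

lemma arith (q w r : ℕ) (hq : 2 ≤ q)
    (h : q * (q ^ (w + 1) - 1) * (q ^ r * q ^ r - q ^ r)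
      = (q ^ (r + 1) * q ^ (r + 1) - q ^ (r + 1)) * (q ^ w - 1)) :
    w = r := by
  have h1 : 1 ≤ q ^ (w + 1) := Nat.one_le_pow _ _ (by omega)
  have h2 : 1 ≤ q ^ w := Nat.one_le_pow _ _ (by omega)
  have h3 : q ^ r ≤ q ^ r * q ^ r := Nat.le_mul_of_pos_left _ (Nat.pow_pos (by omega))
  have h4 : q ^ (r + 1) ≤ q ^ (r + 1) * q ^ (r + 1) :=
    Nat.le_mul_of_pos_left _ (Nat.pow_pos (by omega))
  zify [h1, h2, h3, h4] at h
  have hq0 : ((q : ℤ)) ≠ 0 := by positivity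
  have hr0 : ((q : ℤ)) ^ r ≠ 0 := by positivity
  have key : ((q : ℤ) ^ w - (q : ℤ) ^ r) * ((q : ℤ) - 1) = 0 := by
    have hc : ((q : ℤ) * q ^ r) * (((q:ℤ) ^ w * q - 1) * ((q:ℤ) ^ r - 1))
        = ((q : ℤ) * q ^ r) * (((q:ℤ) ^ r * q - 1) * ((q:ℤ) ^ w - 1)) := by
      push_cast [pow_succ] at h
      linear_combination h
    have hc2 := mul_left_cancel₀ (mul_ne_zero hq0 hr0) hc
    linear_combination -hc2
  have hq1 : ((q : ℤ) - 1) ≠ 0 := by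
    have : (2 : ℤ) ≤ (q : ℤ) := by exact_mod_cast hq
    omega
  have hpow : (q : ℤ) ^ w = (q : ℤ) ^ r := by
    have := mul_eq_zero.mp key
    rcases this with h5 | h5
    · omega
    · exact absurd h5 hq1
  have : q ^ w = q ^ r := by exact_mod_cast hpow
  exact Nat.pow_right_injective hq this

end Stmt11Aux

noncomputable local instance instDualFintype' (F : Type) [Field F] [Fintype F] (v : ℕ) :
    Fintype (Module.Dual F (Fin v → F)) :=
  Fintype.ofInjective DFunLike.coe DFunLike.coe_injective

theorem stmt11 (q v r : ℕ) (F : Type) [Field F] [Fintype F] (hF : Fintype.card F = q)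
    (S : Finset (Submodule F (Fin v → F))) (hpts : ∀ P ∈ S, finrank F P = 1)
    (hcard : S.card = q ^ (r + 1))
    (hhyp : ∀ H : Submodule F (Fin v → F), finrank F H = v - 1 →
      (S.filter fun P => P ≤ H).card = 0 ∨ (S.filter fun P => P ≤ H).card = q ^ r)
    (hspan : (⨆ P ∈ S, P) = (⊤ : Submodule F (Fin v → F))) :
    v = r + 2 ∧ ∃ H : Submodule F (Fin v → F), finrank F H = v - 1 ∧
      ∀ P : Submodule F (Fin v → F), finrank F P = 1 → (P ∈ S ↔ ¬ P ≤ H) := by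
  classical
  have hq2 : 2 ≤ q := hF ▸ Fintype.one_lt_card
  -- v ≥ 2
  have hS2 : 1 < S.card := by
    rw [hcard]
    exact Nat.one_lt_pow (by omega) hq2
  obtain ⟨P₀, hP₀, Q₀, hQ₀, hne₀⟩ := Finset.one_lt_card.mp hS2
  have hv : 2 ≤ v := by
    have h1 := Stmt11Aux.sup_rank_two P₀ Q₀ (hpts _ hP₀) (hpts _ hQ₀) hne₀
    have h2 := Submodule.finrank_le (P₀ ⊔ Q₀ : Submodule F (Fin v → F))
    rw [finrank_fin_fun] at h2
    omega
  set D := Finset.univ.filter (fun f : Module.Dual F (Fin v → F) => f ≠ 0) with hD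
  -- Equation 2 (first moment)
  have E2 : ∑ f ∈ D, (S.filter fun P => P ≤ LinearMap.ker f).card
      = S.card * (q ^ (v - 1) - 1) := by
    have step1 : ∑ f ∈ D, (S.filter fun P => P ≤ LinearMap.ker f).card
        = ∑ f ∈ D, ∑ P ∈ S, if P ≤ LinearMap.ker f then 1 else 0 :=
      Finset.sum_congr rfl fun f _ => Finset.card_filter _ _
    rw [step1, Finset.sum_comm]
    have step2 : ∀ P ∈ S,
        (∑ f ∈ D, if P ≤ LinearMap.ker f then 1 else 0) = q ^ (v - 1) - 1 := by
      intro P hP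
      rw [← Finset.card_filter]
      have h1 : D.filter (fun f => P ≤ LinearMap.ker f)
          = Finset.univ.filter
              (fun f : Module.Dual F (Fin v → F) => f ≠ 0 ∧ P ≤ LinearMap.ker f) := by
        rw [hD, Finset.filter_filter]
      rw [h1, Stmt11Aux.ann_card_ne, hpts P hP, hF]
    rw [Finset.sum_congr rfl step2, Finset.sum_const, smul_eq_mul]
  -- Equation 3 (second moment)
  have E3 : ∑ f ∈ D, ((S.filter fun P => P ≤ LinearMap.ker f).offDiag).card
      = (S.card * S.card - S.card) * (q ^ (v - 2) - 1) := by
    have hod : ∀ f : Module.Dual F (Fin v → F),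
        ((S.filter fun P => P ≤ LinearMap.ker f).offDiag)
        = S.offDiag.filter
            (fun z => z.1 ≤ LinearMap.ker f ∧ z.2 ≤ LinearMap.ker f) := by
      intro f; ext z
      simp only [Finset.mem_offDiag, Finset.mem_filter]
      tauto
    calc ∑ f ∈ D, ((S.filter fun P => P ≤ LinearMap.ker f).offDiag).card
        = ∑ f ∈ D, ∑ z ∈ S.offDiag,
            if z.1 ≤ LinearMap.ker f ∧ z.2 ≤ LinearMap.ker f then 1 else 0 := by
          refine Finset.sum_congr rfl fun f _ => ?_
          rw [hod f]
          exact Finset.card_filter _ _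
      _ = ∑ z ∈ S.offDiag, ∑ f ∈ D,
            if z.1 ≤ LinearMap.ker f ∧ z.2 ≤ LinearMap.ker f then 1 else 0 :=
          Finset.sum_comm
      _ = ∑ _z ∈ S.offDiag, (q ^ (v - 2) - 1) := by
          refine Finset.sum_congr rfl fun z hz => ?_
          rw [Finset.mem_offDiag] at hz
          rw [← Finset.card_filter]
          have h1 : D.filter
              (fun f => z.1 ≤ LinearMap.ker f ∧ z.2 ≤ LinearMap.ker f)
              = Finset.univ.filter (fun f : Module.Dual F (Fin v → F) =>
                  f ≠ 0 ∧ (z.1 ⊔ z.2) ≤ LinearMap.ker f) := by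
            rw [hD, Finset.filter_filter]
            apply Finset.filter_congr
            intro f _
            simp [sup_le_iff]
          rw [h1, Stmt11Aux.ann_card_ne,
            Stmt11Aux.sup_rank_two z.1 z.2 (hpts _ hz.1) (hpts _ hz.2.1) hz.2.2, hF]
      _ = (S.card * S.card - S.card) * (q ^ (v - 2) - 1) := by
          rw [Finset.sum_const, smul_eq_mul, Finset.offDiag_card]
  -- split into empty / nonempty hyperplanes
  set A := D.filter (fun f => (S.filter fun P => P ≤ LinearMap.ker f).card = 0) with hA
  set B := D.filter (fun f => ¬ (S.filter fun P => P ≤ LinearMap.ker f).card = 0) with hB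
  have hBval : ∀ f ∈ B, (S.filter fun P => P ≤ LinearMap.ker f).card = q ^ r := by
    intro f hf
    rw [hB, Finset.mem_filter] at hf
    obtain ⟨hfD, hfne⟩ := hf
    rw [hD, Finset.mem_filter] at hfD
    rcases hhyp (LinearMap.ker f) (Stmt11Aux.ker_rank f hfD.2) with h | h
    · exact absurd h hfne
    · exact h
  have hsplit2 : B.card * q ^ r = S.card * (q ^ (v - 1) - 1) := by
    have h1 := Finset.sum_filter_add_sum_filter_not D
      (fun f => (S.filter fun P => P ≤ LinearMap.ker f).card = 0)
      (fun f => (S.filter fun P => P ≤ LinearMap.ker f).card)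
    have h2 : ∑ f ∈ A, (S.filter fun P => P ≤ LinearMap.ker f).card = 0 := by
      apply Finset.sum_eq_zero
      intro f hf
      exact (Finset.mem_filter.mp hf).2
    have h3 : ∑ f ∈ B, (S.filter fun P => P ≤ LinearMap.ker f).card
        = B.card * q ^ r := by
      rw [Finset.sum_congr rfl hBval, Finset.sum_const, smul_eq_mul]
    rw [← hA, ← hB, h2, h3, zero_add] at h1
    exact h1.trans E2
  have hsplit3 : B.card * (q ^ r * q ^ r - q ^ r)
      = (S.card * S.card - S.card) * (q ^ (v - 2) - 1) := by
    have h1 := Finset.sum_filter_add_sum_filter_not D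
      (fun f => (S.filter fun P => P ≤ LinearMap.ker f).card = 0)
      (fun f => ((S.filter fun P => P ≤ LinearMap.ker f).offDiag).card)
    have h2 : ∑ f ∈ A, ((S.filter fun P => P ≤ LinearMap.ker f).offDiag).card = 0 := by
      apply Finset.sum_eq_zero
      intro f hf
      have hz := (Finset.mem_filter.mp hf).2
      rw [Finset.offDiag_card, hz]
      omega
    have h3 : ∑ f ∈ B, ((S.filter fun P => P ≤ LinearMap.ker f).offDiag).card
        = B.card * (q ^ r * q ^ r - q ^ r) := by
      have h4 : ∀ f ∈ B, ((S.filter fun P => P ≤ LinearMap.ker f).offDiag).card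
          = q ^ r * q ^ r - q ^ r := by
        intro f hf
        rw [Finset.offDiag_card, hBval f hf]
      rw [Finset.sum_congr rfl h4, Finset.sum_const, smul_eq_mul]
    rw [← hA, ← hB, h2, h3, zero_add] at h1
    exact h1.trans E3
  -- compute B.card
  have hqr : 0 < q ^ r := Nat.pow_pos (by omega)
  have hBcard : B.card = q * (q ^ (v - 1) - 1) := by
    apply Nat.eq_of_mul_eq_mul_right hqr
    rw [hsplit2, hcard, pow_succ]
    ring
  -- conclude v = r + 2
  have hmain : q * (q ^ ((v - 2) + 1) - 1) * (q ^ r * q ^ r - q ^ r)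
      = (q ^ (r + 1) * q ^ (r + 1) - q ^ (r + 1)) * (q ^ (v - 2) - 1) := by
    have hv1 : v - 1 = (v - 2) + 1 := by omega
    rw [← hv1, ← hBcard, hsplit3, hcard]
  have hvr : v = r + 2 := by
    have := Stmt11Aux.arith q (v - 2) r hq2 hmain
    omega
  refine ⟨hvr, ?_⟩
  -- find the empty hyperplane
  have hDcard : D.card = q ^ v - 1 := by
    have h1 : D = Finset.univ.filter (fun f : Module.Dual F (Fin v → F) =>
        f ≠ 0 ∧ (⊥ : Submodule F (Fin v → F)) ≤ LinearMap.ker f) := by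
      rw [hD]
      apply Finset.filter_congr
      intro f _
      simp
    rw [h1, Stmt11Aux.ann_card_ne, finrank_bot, Nat.sub_zero, hF]
  have hAB : A.card + B.card = D.card := by
    rw [hA, hB]
    exact Finset.card_filter_add_card_filter_not _
  have hApos : 0 < A.card := by
    have h1 : q ^ v = q ^ (v - 1) * q := by
      rw [← pow_succ]
      congr 1
      omega
    have h2 : 1 ≤ q ^ (v - 1) := Nat.one_le_pow _ _ (by omega)
    have h3 : q * (q ^ (v - 1) - 1) = q * q ^ (v - 1) - q := by
      rw [Nat.mul_sub, mul_one]
    have h4 : q * q ^ (v - 1) = q ^ v := by rw [h1, mul_comm]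
    have h5 : q ≤ q ^ v := Nat.le_self_pow (by omega) q
    rw [hDcard, hBcard, h3, h4] at hAB
    omega
  obtain ⟨f₀, hf₀⟩ := Finset.card_pos.mp hApos
  rw [hA, Finset.mem_filter] at hf₀
  obtain ⟨hf₀D, hf₀N⟩ := hf₀
  rw [hD, Finset.mem_filter] at hf₀D
  have hf₀ne : f₀ ≠ 0 := hf₀D.2
  have hH : finrank F (LinearMap.ker f₀) = v - 1 := Stmt11Aux.ker_rank f₀ hf₀ne
  refine ⟨LinearMap.ker f₀, hH, ?_⟩
  -- S avoids the hyperplane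
  have hSH : ∀ P ∈ S, ¬ P ≤ LinearMap.ker f₀ := by
    intro P hP hle
    have h1 : P ∈ S.filter (fun P => P ≤ LinearMap.ker f₀) :=
      Finset.mem_filter.mpr ⟨hP, hle⟩
    rw [Finset.card_eq_zero] at hf₀N
    rw [hf₀N] at h1
    exact absurd h1 (Finset.notMem_empty P)
  -- counting points off the hyperplane
  set T := Finset.univ.filter (fun P : Submodule F (Fin v → F) =>
      finrank F P = 1 ∧ ¬ P ≤ LinearMap.ker f₀) with hT
  have hTcard : T.card = q ^ (v - 1) := by
    apply Nat.eq_of_mul_eq_mul_right (show 0 < q - 1 by omega)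
    have h0 := Stmt11Aux.points_off hv (LinearMap.ker f₀) hH
    rw [hF] at h0
    rw [← hT] at h0
    have h1 : q ^ v = q ^ (v - 1) * q := by
      rw [← pow_succ]
      congr 1
      omega
    rw [h0, h1, Nat.mul_sub, mul_one, mul_comm (q ^ (v - 1)) q]
  have hsub : S ⊆ T := by
    intro P hP
    rw [hT, Finset.mem_filter]
    exact ⟨Finset.mem_univ _, hpts P hP, hSH P hP⟩
  have hST : S = T := by
    apply Finset.eq_of_subset_of_card_le hsub
    rw [hTcard, hcard]
    have hv1 : v - 1 = r + 1 := by omega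
    rw [hv1]
  intro P hP1
  constructor
  · intro hPS
    exact hSH P hPS
  · intro hPH
    rw [hST, hT]
    exact Finset.mem_filter.mpr ⟨Finset.mem_univ _, hP1, hPH⟩
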